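/- Let $\Gamma$ be an odd minimal edge cutset in the box graph $G_n$ ($n \geq 2$) of $\mathbb{Z}^d$ ($d \geq 2$) separating a fixed even vertex $x$ from the boundary $B_n$. Then $|\Gamma| \geq 2d(2d-1)$. -/

import Mathlib

namespace OMCaux

def sgn (b : Bool) : ℤ := if b then 1 else -1

def vec (d : ℕ) (u : Fin d × Bool) : Fin d → ℤ := fun i => if i = u.1 then sgn u.2 else 0

lemma vec_self (d : ℕ) (u : Fin d × Bool) : vec d u u.1 = sgn u.2 := by simp [vec]

lemma abs_vec_le (d : ℕ) (u : Fin d × Bool) (c : Fin d) : |vec d u c| ≤ 1 := by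
  by_cases h : c = u.1 <;> cases hu : u.2 <;> simp [vec, h, sgn, hu]

lemma sum_abs_vec (d : ℕ) (u : Fin d × Bool) : ∑ i, |vec d u i| = 1 := by
  have h : ∀ i : Fin d, |vec d u i| = if i = u.1 then 1 else 0 := by
    intro i
    by_cases h : i = u.1 <;> cases hu : u.2 <;> simp [vec, h, sgn, hu]
  rw [Finset.sum_congr rfl (fun i _ => h i)]
  simp

lemma vec_inj {d : ℕ} {u u' : Fin d × Bool} (h : ∀ i, vec d u i = vec d u' i) : u = u' := by
  obtain ⟨j, b⟩ := u; obtain ⟨j', b'⟩ := u'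
  have h1 := h j
  by_cases hjj : j = j'
  · subst hjj
    simp only [vec] at h1
    simp only [if_true] at h1
    cases b <;> cases b' <;> simp [sgn] at h1 ⊢
  · simp only [vec] at h1
    simp only [if_true] at h1
    rw [if_neg hjj] at h1
    cases b <;> simp [sgn] at h1

lemma core {d : ℕ} (u u' w : Fin d × Bool) (c : ℤ) (hc : c ≠ 0)
    (h : ∀ i, vec d u' i - vec d u i = c * vec d w i) :
    (c = 2 ∧ u' = w) ∨ (c = -2 ∧ u = w) := by
  obtain ⟨j, b⟩ := u; obtain ⟨j', b'⟩ := u'; obtain ⟨k, bw⟩ := w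
  by_cases hjk' : j' = k
  · by_cases hjj : j = j'
    · subst hjk'; subst hjj
      have hk := h j
      simp only [vec] at hk
      simp only [if_true] at hk
      cases b <;> cases b' <;> cases bw <;> simp [sgn, Prod.mk.injEq] at hk ⊢ <;> omega
    · subst hjk'
      have h1 := h j
      simp only [vec] at h1
      simp only [if_true] at h1
      rw [if_neg hjj, if_neg hjj] at h1
      cases b <;> simp [sgn] at h1
  · by_cases hjk : j = k
    · subst hjk
      have h1 := h j'
      simp only [vec] at h1
      simp only [if_true] at h1
      rw [if_neg hjk', if_neg hjk'] at h1
      cases b' <;> simp [sgn] at h1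
    · have h1 := h k
      simp only [vec] at h1
      simp only [if_true] at h1
      rw [if_neg (fun hh : (k : Fin d) = j' => hjk' hh.symm),
          if_neg (fun hh : (k : Fin d) = j => hjk hh.symm)] at h1
      cases bw <;> simp [sgn] at h1 <;> omega

end OMCaux

/-- Nearest-neighbor adjacency in `ℤ^d`. -/
def latAdj (d : ℕ) (v w : Fin d → ℤ) : Prop := ∑ i, |v i - w i| = 1

/-- Membership in the box `[-n, n]^d`. -/
def inBox (d n : ℕ) (v : Fin d → ℤ) : Prop := ∀ i, |v i| ≤ (n : ℤ)

/-- Membership in the boundary `B_n = [-n,n]^d \ [-(n-1),n-1]^d`. -/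
def onBoundary (d n : ℕ) (v : Fin d → ℤ) : Prop :=
  inBox d n v ∧ ∃ i, |v i| = (n : ℤ)

/-- A walk of length `k` inside the box avoiding a set of edges `Γ`. -/
def IsAvoidingWalk (d n : ℕ) (Γ : Set (Sym2 (Fin d → ℤ))) (k : ℕ)
    (p : ℕ → Fin d → ℤ) : Prop :=
  (∀ i ≤ k, inBox d n (p i)) ∧ (∀ i < k, latAdj d (p i) (p (i + 1))) ∧
    (∀ i < k, s(p i, p (i + 1)) ∉ Γ)

namespace OMCaux

/-- endpoint on the ray: `x - vec u + t • vec w` -/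
def ept (d : ℕ) (x : Fin d → ℤ) (u w : Fin d × Bool) (t : ℤ) : Fin d → ℤ :=
  fun c => x c - vec d u c + t * vec d w c

/-- the walk: `x, x - vec u, x - vec u + vec w, ...` -/
def pth (d : ℕ) (x : Fin d → ℤ) (u w : Fin d × Bool) (t : ℕ) : Fin d → ℤ :=
  if t = 0 then x else ept d x u w ((t : ℤ) - 1)

lemma pth_zero (d : ℕ) (x : Fin d → ℤ) (u w : Fin d × Bool) : pth d x u w 0 = x := rfl

lemma pth_succ (d : ℕ) (x : Fin d → ℤ) (u w : Fin d × Bool) (t : ℕ) :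
    pth d x u w (t + 1) = ept d x u w t := by
  unfold pth
  rw [if_neg (Nat.succ_ne_zero t)]
  have : ((t + 1 : ℕ) : ℤ) - 1 = (t : ℤ) := by push_cast; ring
  rw [this]

lemma pth_adj (d : ℕ) (x : Fin d → ℤ) (u w : Fin d × Bool) (t : ℕ) :
    latAdj d (pth d x u w t) (pth d x u w (t + 1)) := by
  cases t with
  | zero =>
    show ∑ i, |pth d x u w 0 i - pth d x u w 1 i| = 1
    have h1 : pth d x u w 1 = ept d x u w 0 := pth_succ d x u w 0
    rw [pth_zero, h1]
    calc ∑ i, |x i - ept d x u w 0 i| = ∑ i, |vec d u i| :=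
          Finset.sum_congr rfl (fun c _ => by simp [ept])
      _ = 1 := sum_abs_vec d u
  | succ s =>
    show ∑ i, |pth d x u w (s+1) i - pth d x u w (s+1+1) i| = 1
    rw [pth_succ, pth_succ]
    push_cast
    calc ∑ i, |ept d x u w (s:ℤ) i - ept d x u w ((s:ℤ)+1) i| = ∑ i, |vec d w i| :=
          Finset.sum_congr rfl (fun c _ => by
            have h : ept d x u w (s:ℤ) c - ept d x u w ((s:ℤ)+1) c = -(vec d w c) := by
              simp only [ept]; ring
            rw [h, abs_neg])
      _ = 1 := sum_abs_vec d w

end OMCaux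

theorem omcut_size_lower_bound (d n : ℕ) (hd : 2 ≤ d) (hn : 2 ≤ n)
    (x : Fin d → ℤ) (hx : inBox d n x) (hxB : ¬ onBoundary d n x)
    (hxeven : Even (∑ i, x i))
    (Γ : Set (Sym2 (Fin d → ℤ)))
    (hedges : ∀ e ∈ Γ, ∃ a b, e = s(a, b) ∧ latAdj d a b ∧ inBox d n a ∧ inBox d n b)
    (hsep : ∀ (k : ℕ) (p : ℕ → Fin d → ℤ), p 0 = x → onBoundary d n (p k) →
      (∀ i ≤ k, inBox d n (p i)) → (∀ i < k, latAdj d (p i) (p (i + 1))) →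
      ∃ i < k, s(p i, p (i + 1)) ∈ Γ)
    (hmin : ∀ e ∈ Γ, ∃ (k : ℕ) (p : ℕ → Fin d → ℤ), p 0 = x ∧ onBoundary d n (p k) ∧
      (∀ i ≤ k, inBox d n (p i)) ∧ (∀ i < k, latAdj d (p i) (p (i + 1))) ∧
      (∀ i < k, s(p i, p (i + 1)) ∈ Γ → s(p i, p (i + 1)) = e))
    (hodd : ∀ v, (∃ (k : ℕ) (p : ℕ → Fin d → ℤ),
        IsAvoidingWalk d n Γ k p ∧ p 0 = x ∧ p k = v) →
      (∃ e ∈ Γ, v ∈ e) → Odd (∑ i, v i)) :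
    2 * d * (2 * d - 1) ≤ Γ.ncard := by
  classical
  -- every coordinate of x is at most n-1 in absolute value
  have hxbd : ∀ c, |x c| ≤ (n : ℤ) - 1 := by
    intro c
    have h1 := hx c
    have h2 : |x c| ≠ (n : ℤ) := fun h => hxB ⟨hx, c, h⟩
    have h3 := lt_of_le_of_ne h1 h2
    linarith
  -- x is not an endpoint of any edge of Γ
  have hxnot : ∀ e ∈ Γ, x ∉ e := by
    intro e he hxe
    have hodd' := hodd x ⟨0, fun _ => x,
      ⟨⟨fun i _ => hx, fun i hi => absurd hi (Nat.not_lt_zero i),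
        fun i hi => absurd hi (Nat.not_lt_zero i)⟩, rfl, rfl⟩⟩ ⟨e, he, hxe⟩
    exact (Int.not_odd_iff_even.mpr hxeven) hodd'
  -- for each pair of signed directions, a Γ-edge on the associated ray
  have key : ∀ u w : Fin d × Bool, u ≠ w → ∃ t : ℕ,
      s(OMCaux.ept d x u w (t : ℤ), OMCaux.ept d x u w ((t : ℤ) + 1)) ∈ Γ := by
    intro u w huw
    set s : ℤ := OMCaux.sgn w.2 with hsdef
    set a : ℤ := x w.1 - OMCaux.vec d u w.1 with hadef
    have hsw : s = 1 ∨ s = -1 := by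
      rw [hsdef]; cases hb : w.2 <;> simp [OMCaux.sgn, hb]
    have haabs : |a| ≤ (n : ℤ) := by
      have h1 := hxbd w.1
      have h2 := OMCaux.abs_vec_le d u w.1
      rw [abs_le] at h1 h2 ⊢
      rw [hadef]
      constructor <;> linarith [h1.1, h1.2, h2.1, h2.2]
    have ha' := abs_le.mp haabs
    have hsa : s * a ≤ (n : ℤ) := by
      rcases hsw with h | h <;> rw [h] <;> linarith [ha'.1, ha'.2]
    set m : ℕ := ((n : ℤ) - s * a).toNat with hmdef
    have hm : (m : ℤ) = (n : ℤ) - s * a := Int.toNat_of_nonneg (by linarith)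
    have hww : OMCaux.vec d w w.1 = s := (OMCaux.vec_self d w).trans hsdef.symm
    -- the walk stays in the box
    have hbox : ∀ i ≤ m + 1, inBox d n (OMCaux.pth d x u w i) := by
      intro i hi
      cases i with
      | zero => rw [OMCaux.pth_zero]; exact hx
      | succ j =>
        rw [OMCaux.pth_succ]
        intro c
        by_cases hc : c = w.1
        · subst hc
          simp only [OMCaux.ept]
          rw [hww, ← hadef]
          have hj : (j : ℤ) ≤ (m : ℤ) := by exact_mod_cast Nat.le_of_succ_le_succ hi
          have hj0 : (0 : ℤ) ≤ (j : ℤ) := Int.natCast_nonneg j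
          rw [abs_le]
          rcases hsw with h | h <;> rw [h] at hm ⊢ <;>
            constructor <;> linarith [ha'.1, ha'.2]
        · have h0 : OMCaux.vec d w c = 0 := by simp [OMCaux.vec, hc]
          simp only [OMCaux.ept]
          rw [h0, mul_zero, add_zero]
          have h1 := abs_le.mp (hxbd c)
          have h2 := abs_le.mp (OMCaux.abs_vec_le d u c)
          rw [abs_le]
          constructor <;> linarith [h1.1, h1.2, h2.1, h2.2]
    -- the walk ends on the boundary
    have hbd : onBoundary d n (OMCaux.pth d x u w (m + 1)) := by
      refine ⟨hbox (m + 1) le_rfl, w.1, ?_⟩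
      rw [OMCaux.pth_succ]
      simp only [OMCaux.ept]
      rw [hww, ← hadef, hm]
      have hval : a + ((n : ℤ) - s * a) * s = s * (n : ℤ) := by
        rcases hsw with h | h <;> rw [h] <;> ring
      rw [hval, abs_mul]
      have habs_s : |s| = 1 := by rcases hsw with h | h <;> rw [h] <;> norm_num
      rw [habs_s, one_mul, Int.abs_natCast]
    obtain ⟨i, hik, hiΓ⟩ := hsep (m + 1) (OMCaux.pth d x u w)
      (OMCaux.pth_zero d x u w) hbd hbox (fun i _ => OMCaux.pth_adj d x u w i)
    cases i with
    | zero =>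
      exfalso
      refine hxnot _ hiΓ ?_
      rw [OMCaux.pth_zero]
      exact Sym2.mem_mk_left _ _
    | succ j =>
      refine ⟨j, ?_⟩
      have e1 : OMCaux.pth d x u w (j + 1) = OMCaux.ept d x u w (j : ℤ) :=
        OMCaux.pth_succ d x u w j
      have e2 : OMCaux.pth d x u w (j + 1 + 1) = OMCaux.ept d x u w ((j : ℤ) + 1) := by
        rw [OMCaux.pth_succ]; norm_cast
      rw [← e1, ← e2]
      exact hiΓ
  -- choose the edges
  have key' : ∀ pr : (Fin d × Bool) × (Fin d × Bool), ∃ t : ℕ, pr.1 ≠ pr.2 →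
      s(OMCaux.ept d x pr.1 pr.2 (t : ℤ), OMCaux.ept d x pr.1 pr.2 ((t : ℤ) + 1)) ∈ Γ := by
    intro pr
    by_cases h : pr.1 = pr.2
    · exact ⟨0, fun h' => absurd h h'⟩
    · obtain ⟨t, ht⟩ := key pr.1 pr.2 h
      exact ⟨t, fun _ => ht⟩
  obtain ⟨F, hFΓ, hFdesc⟩ : ∃ F : ((Fin d × Bool) × (Fin d × Bool)) → Sym2 (Fin d → ℤ),
      (∀ pr, pr.1 ≠ pr.2 → F pr ∈ Γ) ∧
      (∀ pr : (Fin d × Bool) × (Fin d × Bool), ∃ t : ℤ, 0 ≤ t ∧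
        F pr = s(OMCaux.ept d x pr.1 pr.2 t, OMCaux.ept d x pr.1 pr.2 (t + 1))) := by
    choose t ht using key'
    exact ⟨fun pr => s(OMCaux.ept d x pr.1 pr.2 ((t pr : ℕ) : ℤ),
        OMCaux.ept d x pr.1 pr.2 (((t pr : ℕ) : ℤ) + 1)),
      fun pr h => ht pr h, fun pr => ⟨((t pr : ℕ) : ℤ), Int.natCast_nonneg _, rfl⟩⟩
  -- injectivity of the chosen edges
  have hinj : ∀ p1 p2 : (Fin d × Bool) × (Fin d × Bool),
      p1.1 ≠ p1.2 → p2.1 ≠ p2.2 → F p1 = F p2 → p1 = p2 := by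
    rintro ⟨u1, w1⟩ ⟨u2, w2⟩ h1 h2 heq
    obtain ⟨T1, hT1, hd1⟩ := hFdesc (u1, w1)
    obtain ⟨T2, hT2, hd2⟩ := hFdesc (u2, w2)
    rw [hd1, hd2] at heq
    simp only at h1 h2
    rcases Sym2.eq_iff.mp heq with ⟨hA, hB⟩ | ⟨hA, hB⟩
    · -- aligned case
      have hw : ∀ c, OMCaux.vec d w1 c = OMCaux.vec d w2 c := by
        intro c
        have e1 := congrFun hA c
        have e2 := congrFun hB c
        simp only [OMCaux.ept] at e1 e2
        linear_combination e2 - e1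
      have hww : w1 = w2 := OMCaux.vec_inj hw
      by_cases hT : T1 = T2
      · have hu : ∀ c, OMCaux.vec d u1 c = OMCaux.vec d u2 c := by
          intro c
          have e1 := congrFun hA c
          simp only [OMCaux.ept] at e1
          linear_combination (-1 : ℤ) * e1 + T1 * hw c + OMCaux.vec d w2 c * hT
        have huu : u1 = u2 := OMCaux.vec_inj hu
        rw [huu, hww]
      · have hcore := OMCaux.core u1 u2 w1 (T2 - T1) (sub_ne_zero.mpr (Ne.symm hT))
          (fun c => by
            have e1 := congrFun hA c
            simp only [OMCaux.ept] at e1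
            linear_combination e1 - T2 * hw c)
        rcases hcore with ⟨-, hco⟩ | ⟨-, hco⟩
        · exact absurd (hco.trans hww) h2
        · exact absurd hco h1
    · -- swapped case
      have hw : ∀ c, OMCaux.vec d w1 c = -OMCaux.vec d w2 c := by
        intro c
        have e1 := congrFun hA c
        have e2 := congrFun hB c
        simp only [OMCaux.ept] at e1 e2
        linear_combination e2 - e1
      have hcore := OMCaux.core u1 u2 w1 (-(T1 + T2 + 1)) (by omega)
        (fun c => by
          have e1 := congrFun hA c
          simp only [OMCaux.ept] at e1
          linear_combination e1 + (T2 + 1) * hw c)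
      rcases hcore with ⟨hc2, -⟩ | ⟨-, hco⟩
      · omega
      · exact absurd hco h1
  -- finiteness of Γ
  have hBfin : {v : Fin d → ℤ | inBox d n v}.Finite := by
    have hsub : {v : Fin d → ℤ | inBox d n v} ⊆
        Set.univ.pi (fun _ : Fin d => Set.Icc (-(n : ℤ)) (n : ℤ)) := by
      intro v hv i _
      exact Set.mem_Icc.mpr (abs_le.mp (hv i))
    exact (Set.Finite.pi (fun i => Set.finite_Icc _ _)).subset hsub
  have hΓfin : Γ.Finite := by
    have hsub : Γ ⊆ (fun p : (Fin d → ℤ) × (Fin d → ℤ) => s(p.1, p.2)) '' ({v | inBox d n v} ×ˢ {v | inBox d n v}) := by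
      intro e he
      obtain ⟨a, b, rfl, -, ha, hb⟩ := hedges e he
      exact ⟨(a, b), ⟨ha, hb⟩, rfl⟩
    exact ((hBfin.prod hBfin).image _).subset hsub
  -- counting
  set S : Finset ((Fin d × Bool) × (Fin d × Bool)) := Finset.univ.offDiag with hS
  have hinjS : Set.InjOn F ↑S := by
    intro p1 hp1 p2 hp2 h
    exact hinj p1 p2 (Finset.mem_offDiag.mp (Finset.mem_coe.mp hp1)).2.2
      (Finset.mem_offDiag.mp (Finset.mem_coe.mp hp2)).2.2 h
  have hsub : ↑(S.image F) ⊆ Γ := by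
    intro e he
    obtain ⟨pr, hpr, rfl⟩ := Finset.mem_image.mp (Finset.mem_coe.mp he)
    exact hFΓ pr (Finset.mem_offDiag.mp hpr).2.2
  have hcard : S.card = 2 * d * (2 * d - 1) := by
    rw [hS, Finset.offDiag_card, Finset.card_univ]
    have hD : Fintype.card ((Fin d) × Bool) = 2 * d := by
      simp [Fintype.card_prod, mul_comm]
    rw [hD, Nat.mul_sub, mul_one]
  calc 2 * d * (2 * d - 1) = S.card := hcard.symm
    _ = (S.image F).card := (Finset.card_image_of_injOn hinjS).symm
    _ = (↑(S.image F) : Set (Sym2 (Fin d → ℤ))).ncard := (Set.ncard_coe_finset _).symm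
    _ ≤ Γ.ncard := Set.ncard_le_ncard hsub hΓfin
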